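/- Let q be a prime and G a commutative group written multiplicatively in which every element x satisfies x^q = 1. Let m, ℓ, ℓ′ be positive integers, g : Fin ℓ → Fin ℓ′ → G, witness shares ω : Fin m → Fin ℓ′ → ZMod q, randomness shares r : Fin m → Fin ℓ′ → ZMod q, and a challenge c ∈ ZMod q. Define y_i := ∏_{j} (g i j)^{Σ_k ω k j}, a_i := ∏_{k} ∏_{j} (g i j)^{r k j}, and z_j := Σ_k (r k j − c · ω k j). Then for every i ∈ Fin ℓ: a_i = y_i^c · ∏_{j} (g i j)^{z_j}. (Completeness of the (m,m)-threshold Σ-protocol proof of knowledge with additively shared witnesses.) -/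
import Mathlib

private lemma pow_congr_mod {q : ℕ} {G : Type*} [CommGroup G] (hG : ∀ x : G, x ^ q = 1)
    (x : G) {a b : ℕ} (h : (a : ZMod q) = (b : ZMod q)) : x ^ a = x ^ b := by
  have hmod : a % q = b % q := (ZMod.natCast_eq_natCast_iff a b q).mp h
  calc x ^ a = x ^ (q * (a / q) + a % q) := by rw [Nat.div_add_mod]
    _ = (x ^ q) ^ (a / q) * x ^ (a % q) := by rw [pow_add, pow_mul]
    _ = (x ^ q) ^ (b / q) * x ^ (b % q) := by rw [hG, one_pow, one_pow, hmod]
    _ = x ^ (q * (b / q) + b % q) := by rw [pow_add, pow_mul]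
    _ = x ^ b := by rw [Nat.div_add_mod]

/-- Completeness of the (m,m)-threshold Σ-protocol proof of knowledge with
additively shared witnesses: the verifier's check `aᵢ = yᵢ^c · ∏ⱼ gᵢⱼ^{zⱼ}`
passes for honestly generated commitments and responses. -/
theorem threshold_sigma_protocol_completeness
    {q : ℕ} (hq : q.Prime)
    {G : Type*} [CommGroup G] (hG : ∀ x : G, x ^ q = 1)
    (m ℓ ℓ' : ℕ) (hm : 0 < m) (hℓ : 0 < ℓ) (hℓ' : 0 < ℓ')
    (g : Fin ℓ → Fin ℓ' → G)
    (ω : Fin m → Fin ℓ' → ZMod q) (r : Fin m → Fin ℓ' → ZMod q)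
    (c : ZMod q) :
    ∀ i : Fin ℓ,
      (∏ k : Fin m, ∏ j : Fin ℓ', (g i j) ^ (r k j).val) =
        (∏ j : Fin ℓ', (g i j) ^ (∑ k : Fin m, ω k j).val) ^ c.val *
          ∏ j : Fin ℓ', (g i j) ^ (∑ k : Fin m, (r k j - c * ω k j)).val := by
  haveI : NeZero q := ⟨hq.pos.ne'⟩
  intro i
  rw [Finset.prod_comm, ← Finset.prod_pow, ← Finset.prod_mul_distrib]
  refine Finset.prod_congr rfl fun j _ => ?_
  rw [Finset.prod_pow_eq_pow_sum, ← pow_mul, ← pow_add]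
  refine pow_congr_mod hG _ ?_
  push_cast [ZMod.natCast_val, ZMod.cast_id, Finset.sum_sub_distrib, Finset.mul_sum]
  rw [← Finset.mul_sum]
  ring
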